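/- Let q be an odd prime power with q > 3 and d = (q-3)/2 a positive integer. Then for every c ∈ F_q with c ∉ {1,-1} and every b ∈ F_q, the equation (x+1)^d - c·x^d = b has at most 9 solutions x ∈ F_q. -/

import Mathlib

open Polynomial

theorem stmt_18 (F : Type*) [Field F] [Fintype F] [DecidableEq F]
    (hodd : Odd (Fintype.card F)) (hq : 3 < Fintype.card F)
    (d : ℕ) (hd : d = (Fintype.card F - 3) / 2) (hdpos : 0 < d) :
    ∀ c : F, c ≠ 1 → c ≠ -1 →
      ∀ b : F, {x : F | (x + 1) ^ d - c * x ^ d = b}.ncard ≤ 9 := by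
  intro c hc1 hc2 b
  obtain ⟨k, hk⟩ := hodd
  have h2d : 2 * (d + 1) = Fintype.card F - 1 := by omega
  have hdne : d ≠ 0 := hdpos.ne'
  set P : F → F → F[X] := fun ε δ => C b * X ^ 2 + C (b - ε + c * δ) * X + C (c * δ) with hP
  have hPne : ∀ ε δ : F, (ε = 1 ∨ ε = -1) → P ε δ ≠ 0 := by
    intro ε δ hε h
    have h0 : (P ε δ).coeff 0 = c * δ := by simp [hP]
    have h1 : (P ε δ).coeff 1 = b - ε + c * δ := by simp [hP]
    have h2 : (P ε δ).coeff 2 = b := by simp [hP]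
    rw [h] at h0 h1 h2
    simp only [coeff_zero] at h0 h1 h2
    have : ε = 0 := by linear_combination h1 - h2 - h0
    rcases hε with rfl | rfl
    · exact one_ne_zero this
    · exact one_ne_zero (by linear_combination -this)
  have hroots : ∀ ε δ : F, (ε = 1 ∨ ε = -1) → ((P ε δ).roots.toFinset).card ≤ 2 := by
    intro ε δ hε
    refine le_trans (Multiset.toFinset_card_le _) (le_trans (card_roots' _) ?_)
    exact natDegree_quadratic_le
  -- at most one of 0, -1 is a solution
  have hnotboth : ¬ ((0 + 1 : F) ^ d - c * 0 ^ d = b ∧ (-1 + 1 : F) ^ d - c * (-1) ^ d = b) := by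
    rintro ⟨h0, hm⟩
    rw [zero_pow hdne] at h0
    rw [show (-1 + 1 : F) = 0 by ring, zero_pow hdne] at hm
    simp at h0 hm
    have hsq : ((-1 : F) ^ d) * ((-1 : F) ^ d) = 1 := by
      rw [← pow_add, ← two_mul, pow_mul]; simp
    rcases mul_self_eq_one_iff.mp hsq with he | he
    · rw [he] at hm; exact hc2 (by linear_combination -hm + h0)
    · rw [he] at hm; exact hc1 (by linear_combination hm - h0)
  classical
  set A : Finset F := ({0, -1} : Finset F).filter (fun x => (x + 1) ^ d - c * x ^ d = b) with hA
  have hAcard : A.card ≤ 1 := by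
    rw [Finset.card_le_one]
    intro a ha a' ha'
    simp only [hA, Finset.mem_filter, Finset.mem_insert, Finset.mem_singleton] at ha ha'
    rcases ha.1 with rfl | rfl <;> rcases ha'.1 with rfl | rfl
    · rfl
    · exact absurd ⟨ha.2, ha'.2⟩ hnotboth
    · exact absurd ⟨ha'.2, ha.2⟩ hnotboth
    · rfl
  set T : Finset F := A ∪ (P 1 1).roots.toFinset ∪ (P 1 (-1)).roots.toFinset ∪
      (P (-1) 1).roots.toFinset ∪ (P (-1) (-1)).roots.toFinset with hT
  have hsub : {x : F | (x + 1) ^ d - c * x ^ d = b} ⊆ ↑T := by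
    intro x hx
    simp only [Set.mem_setOf_eq] at hx
    by_cases hx0 : x = 0
    · subst hx0
      simp only [hT, Finset.coe_union, Set.mem_union, Finset.mem_coe]
      left; left; left; left
      simp only [hA, Finset.mem_filter, Finset.mem_insert, Finset.mem_singleton]
      exact ⟨Or.inl trivial, hx⟩
    by_cases hxm : x = -1
    · subst hxm
      simp only [hT, Finset.coe_union, Set.mem_union, Finset.mem_coe]
      left; left; left; left
      simp only [hA, Finset.mem_filter, Finset.mem_insert, Finset.mem_singleton]
      exact ⟨Or.inr trivial, hx⟩
    -- main case
    have hx1 : x + 1 ≠ 0 := by intro h; apply hxm; linear_combination h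
    have hεsq : ((x + 1) ^ (d + 1)) * ((x + 1) ^ (d + 1)) = 1 := by
      rw [← pow_add, ← two_mul, h2d]
      exact FiniteField.pow_card_sub_one_eq_one _ hx1
    have hδsq : (x ^ (d + 1)) * (x ^ (d + 1)) = 1 := by
      rw [← pow_add, ← two_mul, h2d]
      exact FiniteField.pow_card_sub_one_eq_one _ hx0
    have hroot : x ∈ (P ((x + 1) ^ (d + 1)) (x ^ (d + 1))).roots.toFinset := by
      rw [Multiset.mem_toFinset, mem_roots']
      refine ⟨hPne _ _ (mul_self_eq_one_iff.mp hεsq), ?_⟩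
      simp only [hP, IsRoot, eval_add, eval_mul, eval_pow, eval_C, eval_X]
      rw [pow_succ, pow_succ]
      linear_combination (-(x * (x + 1))) * hx
    rcases mul_self_eq_one_iff.mp hεsq with he | he <;>
      rcases mul_self_eq_one_iff.mp hδsq with hδ | hδ <;>
      rw [he, hδ] at hroot <;>
      simp only [hT, Finset.coe_union, Set.mem_union, Finset.mem_coe] <;> simp only [hroot, or_true, true_or]
  calc {x : F | (x + 1) ^ d - c * x ^ d = b}.ncard ≤ (↑T : Set F).ncard :=
        Set.ncard_le_ncard hsub T.finite_toSet
    _ = T.card := Set.ncard_coe_finset T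
    _ ≤ 9 := by
        have c1 := hroots 1 1 (Or.inl rfl)
        have c2 := hroots 1 (-1) (Or.inl rfl)
        have c3 := hroots (-1) 1 (Or.inr rfl)
        have c4 := hroots (-1) (-1) (Or.inr rfl)
        calc T.card ≤ (A ∪ (P 1 1).roots.toFinset ∪ (P 1 (-1)).roots.toFinset ∪
              (P (-1) 1).roots.toFinset).card + ((P (-1) (-1)).roots.toFinset).card :=
              Finset.card_union_le _ _
          _ ≤ ((A ∪ (P 1 1).roots.toFinset ∪ (P 1 (-1)).roots.toFinset).card +
              ((P (-1) 1).roots.toFinset).card) + ((P (-1) (-1)).roots.toFinset).card := by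
              gcongr; exact Finset.card_union_le _ _
          _ ≤ (((A ∪ (P 1 1).roots.toFinset).card + ((P 1 (-1)).roots.toFinset).card) +
              ((P (-1) 1).roots.toFinset).card) + ((P (-1) (-1)).roots.toFinset).card := by
              gcongr; exact Finset.card_union_le _ _
          _ ≤ (((A.card + ((P 1 1).roots.toFinset).card) + ((P 1 (-1)).roots.toFinset).card) +
              ((P (-1) 1).roots.toFinset).card) + ((P (-1) (-1)).roots.toFinset).card := by
              gcongr; exact Finset.card_union_le _ _
          _ ≤ 9 := by omega
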